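/- arXiv:1908.02920 — 2 statements merged into one kernel-verified Lean document; each statement's English description precedes it below -/
import Mathlib

section
/- Let $\pi$ be a symmetric probability distribution on $\mathbb{Z}$ with variance $\sigma^2$. For $\alpha > 0$ let $h_\alpha(s) = C_\alpha e^{-\alpha s^2/4}$ with $C_\alpha = (\sum_s e^{-\alpha s^2/2})^{-1/2}$. Then $\sum_{s,s'} \pi(s-s')\, h_\alpha(s)\, h_\alpha(s') \geq 1 - \frac{\alpha \sigma^2}{4}$. -/
open scoped BigOperators

private lemma aux_int_abs_le_sq (b : ℤ) : |(b : ℝ)| ≤ (b : ℝ) ^ 2 := by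
  rcases eq_or_ne b 0 with h | h
  · simp [h]
  · have h1 : (1 : ℝ) ≤ |(b : ℝ)| := by
      have := Int.one_le_abs h
      calc (1 : ℝ) ≤ ((|b| : ℤ) : ℝ) := by exact_mod_cast this
        _ = |(b : ℝ)| := by push_cast; ring
    nlinarith [sq_abs (b : ℝ), abs_nonneg (b : ℝ)]

private lemma aux_summable_exp {c : ℝ} (hc : 0 < c) :
    Summable fun n : ℤ => Real.exp (-c * (n : ℝ) ^ 2) := by
  have hr0 : 0 ≤ Real.exp (-c) := (Real.exp_pos _).le
  have hr1 : Real.exp (-c) < 1 := Real.exp_lt_one_iff.mpr (by linarith)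
  have hgeo : Summable fun n : ℤ => Real.exp (-c) ^ n.natAbs := by
    apply Summable.of_nat_of_neg
    · simpa using summable_geometric_of_lt_one hr0 hr1
    · simpa using summable_geometric_of_lt_one hr0 hr1
  refine Summable.of_nonneg_of_le (fun n => (Real.exp_pos _).le) (fun n => ?_) hgeo
  have h1 : Real.exp (-c) ^ n.natAbs = Real.exp ((n.natAbs : ℝ) * (-c)) := by
    rw [← Real.exp_nat_mul]
  rw [h1]
  apply Real.exp_le_exp.mpr
  have h2 : |(n : ℝ)| ≤ (n : ℝ) ^ 2 := aux_int_abs_le_sq n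
  have h3 : ((n.natAbs : ℝ)) = |(n : ℝ)| := by
    rw [Nat.cast_natAbs]; push_cast; ring
  rw [h3]
  nlinarith [abs_nonneg (n : ℝ)]

private lemma aux_summable_sq_exp {c : ℝ} (hc : 0 < c) :
    Summable fun n : ℤ => (n : ℝ) ^ 2 * Real.exp (-c * (n : ℝ) ^ 2) := by
  have hsum : Summable fun n : ℤ => (2 / c) * Real.exp (-(c / 2) * (n : ℝ) ^ 2) :=
    (aux_summable_exp (by linarith : (0:ℝ) < c / 2)).mul_left _
  refine Summable.of_nonneg_of_le
    (fun n => mul_nonneg (sq_nonneg _) (Real.exp_pos _).le) (fun n => ?_) hsum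
  have key : (n : ℝ) ^ 2 ≤ (2 / c) * Real.exp ((c / 2) * (n : ℝ) ^ 2) := by
    have h1 : (c / 2) * (n : ℝ) ^ 2 + 1 ≤ Real.exp ((c / 2) * (n : ℝ) ^ 2) :=
      Real.add_one_le_exp _
    have h2 : (0 : ℝ) < 2 / c := by positivity
    calc (n : ℝ) ^ 2 = (2 / c) * ((c / 2) * (n : ℝ) ^ 2) := by field_simp
      _ ≤ (2 / c) * Real.exp ((c / 2) * (n : ℝ) ^ 2) := by
          apply mul_le_mul_of_nonneg_left _ h2.le; linarith
  calc (n : ℝ) ^ 2 * Real.exp (-c * (n : ℝ) ^ 2)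
      ≤ (2 / c) * Real.exp ((c / 2) * (n : ℝ) ^ 2) * Real.exp (-c * (n : ℝ) ^ 2) := by
        exact mul_le_mul_of_nonneg_right key (Real.exp_pos _).le
    _ = (2 / c) * Real.exp (-(c / 2) * (n : ℝ) ^ 2) := by
        rw [mul_assoc, ← Real.exp_add]; congr 2; ring

private lemma aux_tsum_odd {f : ℤ → ℝ} (h : ∀ n, f (-n) = -f n) : ∑' n, f n = 0 := by
  have h1 : ∑' n : ℤ, f (-n) = ∑' n : ℤ, f n := by
    simpa using (Equiv.neg ℤ).tsum_eq f
  have h2 : ∑' n : ℤ, f (-n) = -∑' n : ℤ, f n := by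
    rw [show (fun n : ℤ => f (-n)) = fun n : ℤ => -f n from funext h, tsum_neg]
  linarith

private def shearEquiv : ℤ × ℤ ≃ ℤ × ℤ where
  toFun q := (q.1 + q.2, q.2)
  invFun p := (p.1 - p.2, p.2)
  left_inv q := by simp
  right_inv p := by simp

/-- Testing against the discrete Gaussian `h_α(s) = C_α e^{-αs²/4}`:
`Σ_{s,s'} π(s-s') h_α(s) h_α(s') ≥ 1 - ασ²/4`. -/
theorem interface_SOS_gaussian_test_lower_bound
    (π : ℤ → ℝ) (hπnn : ∀ η, 0 ≤ π η) (hπsym : ∀ η, π (-η) = π η)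
    (hπsummable : Summable π) (hπ1 : ∑' η, π η = 1)
    (σ2 : ℝ) (hmom : Summable fun η : ℤ => (η : ℝ)^2 * π η)
    (hσ2 : σ2 = ∑' η : ℤ, (η : ℝ)^2 * π η)
    (α : ℝ) (hα : 0 < α)
    (C : ℝ) (hC : C = (∑' s : ℤ, Real.exp (-α * (s : ℝ)^2 / 2)) ^ (-(1 : ℝ) / 2))
    (hα' : ℤ → ℝ) (hdef : ∀ s : ℤ, hα' s = C * Real.exp (-α * (s : ℝ)^2 / 4)) :
    1 - α * σ2 / 4 ≤ ∑' p : ℤ × ℤ, π (p.1 - p.2) * hα' p.1 * hα' p.2 := by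
  set S : ℝ := ∑' s : ℤ, Real.exp (-α * (s : ℝ)^2 / 2) with hS
  have hSsum : Summable fun s : ℤ => Real.exp (-α * (s : ℝ)^2 / 2) :=
    (aux_summable_exp (by linarith : (0:ℝ) < α / 2)).congr fun n => by
      congr 1; ring
  have hSpos : 0 < S := Summable.tsum_pos hSsum (fun i => (Real.exp_pos _).le) 0 (Real.exp_pos _)
  have hCpos : 0 < C := by rw [hC]; exact Real.rpow_pos_of_pos hSpos _
  have hC2 : C ^ 2 = S⁻¹ := by
    rw [hC, ← Real.rpow_natCast (S ^ (-(1:ℝ)/2)) 2, ← Real.rpow_mul hSpos.le]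
    norm_num
    rw [show ((-1 : ℝ)) = -(1:ℝ) from rfl, Real.rpow_neg hSpos.le, Real.rpow_one]
  have hC2S : C ^ 2 * S = 1 := by
    rw [hC2]; exact inv_mul_cancel₀ hSpos.ne'
  -- the squared Gaussian
  set H : ℤ → ℝ := fun b => C ^ 2 * Real.exp (-(α / 2) * (b : ℝ) ^ 2) with hHdef
  have hHnn : ∀ b, 0 ≤ H b := fun b => mul_nonneg (sq_nonneg _) (Real.exp_pos _).le
  have hHsum : Summable H :=
    ((aux_summable_exp (by linarith : (0:ℝ) < α / 2)).mul_left (C ^ 2))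
  have hHtsum : ∑' b, H b = 1 := by
    rw [hHdef, tsum_mul_left]
    have : ∑' b : ℤ, Real.exp (-(α / 2) * (b : ℝ) ^ 2) = S := by
      rw [hS]; exact tsum_congr fun b => by congr 1; ring
    rw [this, hC2S]
  have hhnn : ∀ s, 0 ≤ hα' s := fun s => by
    rw [hdef]; positivity
  have hhsum : Summable hα' := by
    refine ((aux_summable_exp (by linarith : (0:ℝ) < α / 4)).mul_left C).congr fun n => ?_
    rw [hdef]; congr 2; ring
  have hhle : ∀ s, hα' s ≤ C := fun s => by
    rw [hdef]
    calc C * Real.exp (-α * (s : ℝ)^2 / 4) ≤ C * 1 := by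
          apply mul_le_mul_of_nonneg_left _ hCpos.le
          exact Real.exp_le_one_iff.mpr (by nlinarith [sq_nonneg ((s:ℝ))])
      _ = C := mul_one C
  -- key splitting identity
  have hsplit : ∀ τ b : ℤ, hα' (τ + b) * hα' b
      = H b * Real.exp (-(α * (τ:ℝ)^2 / 4 + α * (b:ℝ) * (τ:ℝ) / 2)) := by
    intro τ b
    rw [hdef, hdef, hHdef]
    have h1 : Real.exp (-α * ((τ + b : ℤ) : ℝ)^2 / 4) * Real.exp (-α * (b : ℝ)^2 / 4)
        = Real.exp (-(α / 2) * (b : ℝ)^2) *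
          Real.exp (-(α * (τ:ℝ)^2 / 4 + α * (b:ℝ) * (τ:ℝ) / 2)) := by
      rw [← Real.exp_add, ← Real.exp_add]
      congr 1
      push_cast
      ring
    calc C * Real.exp (-α * ((τ + b : ℤ) : ℝ)^2 / 4) * (C * Real.exp (-α * (b : ℝ)^2 / 4))
        = C ^ 2 * (Real.exp (-α * ((τ + b : ℤ) : ℝ)^2 / 4) * Real.exp (-α * (b : ℝ)^2 / 4)) := by
          ring
      _ = C ^ 2 * (Real.exp (-(α / 2) * (b : ℝ)^2) *
            Real.exp (-(α * (τ:ℝ)^2 / 4 + α * (b:ℝ) * (τ:ℝ) / 2))) := by rw [h1]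
      _ = C ^ 2 * Real.exp (-(α / 2) * (b : ℝ)^2) *
            Real.exp (-(α * (τ:ℝ)^2 / 4 + α * (b:ℝ) * (τ:ℝ) / 2)) := by ring
  -- the function under the tsum, composed with the shear
  set F : ℤ × ℤ → ℝ := fun p => π (p.1 - p.2) * hα' p.1 * hα' p.2 with hF
  have hFe : ∀ q : ℤ × ℤ, F (shearEquiv q) = π q.1 * (hα' (q.1 + q.2) * hα' q.2) := by
    intro q
    simp only [hF, shearEquiv, Equiv.coe_fn_mk, add_sub_cancel_right]
    ring
  -- summability of F ∘ shearEquiv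
  have hFenn : ∀ q : ℤ × ℤ, 0 ≤ F (shearEquiv q) := fun q => by
    rw [hFe]
    exact mul_nonneg (hπnn _) (mul_nonneg (hhnn _) (hhnn _))
  have hFesum : Summable fun q : ℤ × ℤ => F (shearEquiv q) := by
    refine Summable.of_nonneg_of_le hFenn (fun q => ?_)
      (Summable.mul_of_nonneg hπsummable (hhsum.mul_left C) hπnn
        (fun s => mul_nonneg hCpos.le (hhnn s)))
    rw [hFe]
    apply mul_le_mul_of_nonneg_left _ (hπnn _)
    exact mul_le_mul_of_nonneg_right (hhle _) (hhnn _)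
  have hFsum : Summable F := (shearEquiv.summable_iff (f := F)).mp hFesum
  -- the lower-bound function
  set P : ℤ → ℝ := fun τ => π τ * (1 - α * (τ:ℝ)^2 / 4) with hPdef
  set R : ℤ → ℝ := fun τ => -(α / 2) * ((τ:ℝ) * π τ) with hRdef
  set T : ℤ → ℝ := fun b => (b:ℝ) * H b with hTdef
  set G : ℤ × ℤ → ℝ := fun q => P q.1 * H q.2 + R q.1 * T q.2 with hGdef
  -- pointwise bound G ≤ F ∘ shearEquiv
  have hGF : ∀ q : ℤ × ℤ, G q ≤ F (shearEquiv q) := by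
    intro q
    rw [hFe, hsplit]
    have hz : 1 - (α * (q.1:ℝ)^2 / 4 + α * (q.2:ℝ) * (q.1:ℝ) / 2)
        ≤ Real.exp (-(α * (q.1:ℝ)^2 / 4 + α * (q.2:ℝ) * (q.1:ℝ) / 2)) := by
      have := Real.add_one_le_exp (-(α * (q.1:ℝ)^2 / 4 + α * (q.2:ℝ) * (q.1:ℝ) / 2))
      linarith
    have hGeq : G q = π q.1 * H q.2 *
        (1 - (α * (q.1:ℝ)^2 / 4 + α * (q.2:ℝ) * (q.1:ℝ) / 2)) := by
      simp only [hGdef, hPdef, hRdef, hTdef]; ring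
    rw [hGeq, show π q.1 * (H q.2 * Real.exp (-(α * (q.1:ℝ)^2 / 4 + α * (q.2:ℝ) * (q.1:ℝ) / 2)))
        = π q.1 * H q.2 * Real.exp (-(α * (q.1:ℝ)^2 / 4 + α * (q.2:ℝ) * (q.1:ℝ) / 2)) from by ring]
    exact mul_le_mul_of_nonneg_left hz (mul_nonneg (hπnn _) (hHnn _))
  -- summability facts for the pieces
  have hPsum : Summable P :=
    (hπsummable.sub (hmom.mul_left (α / 4))).congr fun τ => by
      simp only [hPdef]; ring
  have hPnormsum : Summable fun τ => ‖P τ‖ := by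
    refine Summable.of_nonneg_of_le (fun τ => norm_nonneg _) (fun τ => ?_)
      (hπsummable.add (hmom.mul_left (α / 4)))
    have h1 : ‖P τ‖ ≤ π τ * (1 + α * (τ:ℝ)^2 / 4) := by
      rw [hPdef]
      simp only [Real.norm_eq_abs, abs_mul, abs_of_nonneg (hπnn τ)]
      apply mul_le_mul_of_nonneg_left _ (hπnn τ)
      rw [abs_le]
      constructor <;> nlinarith [sq_nonneg ((τ:ℝ))]
    calc ‖P τ‖ ≤ π τ * (1 + α * (τ:ℝ)^2 / 4) := h1
      _ = π τ + α / 4 * ((τ:ℝ)^2 * π τ) := by ring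
  have hRnormsum : Summable fun τ => ‖R τ‖ := by
    refine Summable.of_nonneg_of_le (fun τ => norm_nonneg _) (fun τ => ?_)
      ((hπsummable.add hmom).mul_left (α / 2))
    have h1 : ‖R τ‖ = α / 2 * (|(τ:ℝ)| * π τ) := by
      rw [hRdef]
      simp only [Real.norm_eq_abs, abs_mul, abs_neg, abs_of_nonneg (hπnn τ),
        abs_of_nonneg (by linarith : (0:ℝ) ≤ α / 2)]
    rw [h1]
    apply mul_le_mul_of_nonneg_left _ (by linarith : (0:ℝ) ≤ α / 2)
    have := aux_int_abs_le_sq τ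
    nlinarith [hπnn τ, sq_nonneg ((τ:ℝ))]
  have hHb2sum : Summable fun b : ℤ => (b:ℝ)^2 * H b := by
    refine ((aux_summable_sq_exp (by linarith : (0:ℝ) < α / 2)).mul_left (C ^ 2)).congr
      fun b => ?_
    simp only [hHdef]; ring
  have hTnormsum : Summable fun b => ‖T b‖ := by
    refine Summable.of_nonneg_of_le (fun b => norm_nonneg _) (fun b => ?_) hHb2sum
    rw [hTdef]
    simp only [Real.norm_eq_abs, abs_mul, abs_of_nonneg (hHnn b)]
    exact mul_le_mul_of_nonneg_right (aux_int_abs_le_sq b) (hHnn b)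
  have hTsum : Summable T := hTnormsum.of_norm
  have hG1sum : Summable fun q : ℤ × ℤ => P q.1 * H q.2 :=
    (hPnormsum.mul_norm (g := H) (by
      simpa only [Real.norm_eq_abs, fun b => abs_of_nonneg (hHnn b)] using hHsum)).of_norm
  have hG2sum : Summable fun q : ℤ × ℤ => R q.1 * T q.2 :=
    (hRnormsum.mul_norm hTnormsum).of_norm
  have hGsum : Summable G := hG1sum.add hG2sum
  -- compute the tsum of G
  have htsumG1 : ∑' q : ℤ × ℤ, P q.1 * H q.2 = 1 - α * σ2 / 4 := by
    rw [Summable.tsum_prod' hG1sum (fun τ => hHsum.mul_left (P τ))]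
    have h1 : ∀ τ : ℤ, ∑' b : ℤ, P τ * H b = P τ := fun τ => by
      rw [tsum_mul_left, hHtsum, mul_one]
    rw [tsum_congr h1]
    have h2 : ∑' τ : ℤ, P τ = ∑' τ : ℤ, (π τ - α / 4 * ((τ:ℝ)^2 * π τ)) :=
      tsum_congr fun τ => by simp only [hPdef]; ring
    rw [h2, Summable.tsum_sub hπsummable (hmom.mul_left (α / 4)), tsum_mul_left, hπ1, ← hσ2]
    ring
  have htsumR : ∑' τ : ℤ, R τ = 0 := by
    apply aux_tsum_odd
    intro n
    simp only [hRdef, hπsym, Int.cast_neg]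
    ring
  have htsumG2 : ∑' q : ℤ × ℤ, R q.1 * T q.2 = 0 := by
    rw [Summable.tsum_prod' hG2sum (fun τ => hTsum.mul_left (R τ))]
    have h1 : ∀ τ : ℤ, ∑' b : ℤ, R τ * T b = R τ * ∑' b, T b := fun τ => tsum_mul_left
    rw [tsum_congr h1, tsum_mul_right, htsumR, zero_mul]
  have htsumG : ∑' q : ℤ × ℤ, G q = 1 - α * σ2 / 4 := by
    rw [hGdef, Summable.tsum_add hG1sum hG2sum, htsumG1, htsumG2, add_zero]
  -- conclude
  calc 1 - α * σ2 / 4 = ∑' q : ℤ × ℤ, G q := htsumG.symm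
    _ ≤ ∑' q : ℤ × ℤ, F (shearEquiv q) := Summable.tsum_le_tsum hGF hGsum hFesum
    _ = ∑' p : ℤ × ℤ, F p := shearEquiv.tsum_eq F
    _ = ∑' p : ℤ × ℤ, π (p.1 - p.2) * hα' p.1 * hα' p.2 := rfl
end

section
/- Let $(\eta_k)$ be i.i.d. integer random variables with symmetric law $\pi$, finite exponential moments for $|a| \leq a_0$ and log-moment generating function $\Lambda(a) = \log\mathbb{E}[e^{a\eta_1}] = \frac{\sigma^2 a^2}{2} + O(a^4)$ as $a \to 0$. Fix $s > 0$, $\alpha \in (0,1)$, $N \geq 1$, let $s_x = s + \sum_{k=1}^x \eta_k$, $n = \lfloor\sqrt{N}\rfloor$, and $z = \inf\{x : s_x \leq (1-\alpha)s\}$. Then there exists a constant $b > 0$ (depending on $\alpha, \sigma$ but not on $s$ or $N$, valid for $s^2 \leq c_0 N$ with suitable $c_0$) such that $\mathbb{E}_s\left[ e^{-\frac{1}{N}\sum_{x=0}^n s_x^2} \right] \leq e^{-\frac{\sqrt{2}\alpha(1-\alpha)s^2}{2\sigma\sqrt{N}}} + e^{-\frac{(1-\alpha)^2 s^2 (n+1)}{N}}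 \leq 2 e^{-\frac{2 b s^2}{\sqrt{N}}}$. -/
open MeasureTheory ProbabilityTheory

set_option linter.unusedSectionVars false
set_option linter.unusedVariables false
set_option maxHeartbeats 1000000

lemma rwqke_indep_helper {Ω : Type*} [MeasurableSpace Ω] {μ : Measure Ω}
    (η : ℕ → Ω → ℤ) (hmeas : ∀ k, Measurable (η k))
    (hindep : iIndepFun η μ)
    (x n : ℕ) (F G : (ℕ → ℤ) → ℝ)
    (hF : ∀ f g : ℕ → ℤ, (∀ k, k < x → f k = g k) → F f = F g)
    (hG : ∀ f g : ℕ → ℤ, (∀ k, x ≤ k → k < n → f k = g k) → G f = G g) :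
    IndepFun (fun ω => F (fun k => η k ω)) (fun ω => G (fun k => η k ω)) μ := by
  classical
  have hdisj : Disjoint (Finset.range x) (Finset.Ico x n) := by
    simp only [Finset.disjoint_left, Finset.mem_range, Finset.mem_Ico]
    omega
  have h := hindep.indepFun_finset (Finset.range x) (Finset.Ico x n) hdisj hmeas
  set φ : ({i // i ∈ Finset.range x} → ℤ) → ℝ :=
    fun v => F (fun k => if h : k ∈ Finset.range x then v ⟨k, h⟩ else 0) with hφdef
  set ψ : ({i // i ∈ Finset.Ico x n} → ℤ) → ℝ :=
    fun v => G (fun k => if h : k ∈ Finset.Ico x n then v ⟨k, h⟩ else 0) with hψdef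
  have h2 := h.comp (φ := φ) (ψ := ψ) (measurable_of_countable φ) (measurable_of_countable ψ)
  convert h2 using 1
  · funext ω
    simp only [Function.comp_apply, hφdef]
    apply hF
    intro k hk
    simp [Finset.mem_range.mpr hk]
  · funext ω
    simp only [Function.comp_apply, hψdef]
    apply hG
    intro k hk1 hk2
    simp [Finset.mem_Ico.mpr ⟨hk1, hk2⟩]

section helpers
variable {Ω : Type*} [MeasurableSpace Ω] {μ : Measure Ω} [IsProbabilityMeasure μ]
  {η : ℕ → Ω → ℤ} (hmeas : ∀ k, Measurable (η k))
  (hid : ∀ k, μ.map (η k) = μ.map (η 0))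

include hmeas hid in
lemma rwqke_exp_int {a : ℝ} (h0 : Integrable (fun ω => Real.exp (a * (η 0 ω : ℝ))) μ) (k : ℕ) :
    Integrable (fun ω => Real.exp (a * (η k ω : ℝ))) μ := by
  have hf : Measurable (fun z : ℤ => Real.exp (a * (z : ℝ))) := measurable_of_countable _
  have h1 : Integrable (fun z : ℤ => Real.exp (a * (z : ℝ))) (μ.map (η 0)) := by
    rw [integrable_map_measure hf.aestronglyMeasurable (hmeas 0).aemeasurable]
    exact h0
  rw [← hid k, integrable_map_measure hf.aestronglyMeasurable (hmeas k).aemeasurable] at h1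
  exact h1

include hmeas hid in
lemma rwqke_exp_integral_eq {a : ℝ} (k : ℕ) :
    ∫ ω, Real.exp (a * (η k ω : ℝ)) ∂μ = ∫ ω, Real.exp (a * (η 0 ω : ℝ)) ∂μ := by
  have hf : Measurable (fun z : ℤ => Real.exp (a * (z : ℝ))) := measurable_of_countable _
  rw [← integral_map (hmeas k).aemeasurable hf.aestronglyMeasurable, hid k,
    integral_map (hmeas 0).aemeasurable hf.aestronglyMeasurable]

variable (hindep : iIndepFun η μ)

include hmeas hindep in
lemma rwqke_indep_real : iIndepFun
    (fun k => fun ω => ((η k ω : ℝ))) μ :=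
  hindep.comp (fun _ => fun z : ℤ => (z : ℝ)) (fun _ => measurable_of_countable _)

include hmeas hid hindep in
lemma rwqke_int_sum {a : ℝ} (h0 : Integrable (fun ω => Real.exp (a * (η 0 ω : ℝ))) μ)
    (t : Finset ℕ) :
    Integrable (fun ω => Real.exp (a * ∑ k ∈ t, (η k ω : ℝ))) μ := by
  have := (rwqke_indep_real hmeas hindep).integrable_exp_mul_sum
    (fun k => (measurable_of_countable _).comp (hmeas k))
    (s := t) (fun k _ => rwqke_exp_int hmeas hid h0 k)
  simpa [Finset.sum_apply] using this

include hmeas hid hindep in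
lemma rwqke_integral_sum {a : ℝ} (t : Finset ℕ) :
    ∫ ω, Real.exp (a * ∑ k ∈ t, (η k ω : ℝ)) ∂μ
      = (∫ ω, Real.exp (a * (η 0 ω : ℝ)) ∂μ) ^ t.card := by
  have h := (rwqke_indep_real hmeas hindep).mgf_sum
    (fun k => (measurable_of_countable _).comp (hmeas k)) t (t := a)
  simp only [mgf, Finset.sum_apply] at h
  rw [h]
  rw [Finset.prod_congr rfl (fun k _ => rwqke_exp_integral_eq hmeas hid k (a := a)),
    Finset.prod_const]

end helpers

lemma rwqke_nat_sqrt_le (N : ℕ) : (Nat.sqrt N : ℝ) ≤ Real.sqrt N := by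
  have h1 : ((Nat.sqrt N : ℝ))^2 ≤ (N : ℝ) := by
    rw [← Nat.cast_pow]; exact_mod_cast Nat.sqrt_le' N
  calc (Nat.sqrt N : ℝ) = Real.sqrt ((Nat.sqrt N : ℝ)^2) := by
        rw [Real.sqrt_sq (Nat.cast_nonneg _)]
    _ ≤ Real.sqrt N := Real.sqrt_le_sqrt h1

lemma rwqke_le_nat_sqrt (N : ℕ) : Real.sqrt N ≤ (Nat.sqrt N : ℝ) + 1 := by
  have h1 : (N : ℝ) ≤ ((Nat.sqrt N : ℝ) + 1)^2 := by
    have := Nat.lt_succ_sqrt' N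
    have h2 : (N : ℝ) < ((Nat.sqrt N + 1 : ℕ) : ℝ) ^ 2 := by exact_mod_cast this
    push_cast at h2; nlinarith
  calc Real.sqrt N ≤ Real.sqrt (((Nat.sqrt N : ℝ) + 1)^2) := Real.sqrt_le_sqrt h1
    _ = (Nat.sqrt N : ℝ) + 1 := Real.sqrt_sq (by positivity)

/-- Exponential estimate for
`𝔼_s[exp(-(1/N) Σ_{x=0}^n s_x²)]` with `n = ⌊√N⌋` and walk started at `s > 0`:
it is bounded by
`exp(-√2 α(1-α)s²/(2σ√N)) + exp(-(1-α)²s²(n+1)/N) ≤ 2 exp(-2bs²/√N)`,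
with `b > 0` depending only on `α, σ`, valid for `s² ≤ c₀ N`. -/
theorem random_walk_quadratic_killing_estimate
    {Ω : Type*} [MeasurableSpace Ω] (μ : Measure Ω) [IsProbabilityMeasure μ]
    (η : ℕ → Ω → ℤ) (hmeas : ∀ k, Measurable (η k))
    (νπ : Measure ℤ) [IsProbabilityMeasure νπ]
    (hsym : νπ.map (fun x : ℤ => -x) = νπ)
    (hident : ∀ k, μ.map (η k) = νπ)
    (hindep : iIndepFun η μ)
    (a₀ : ℝ) (ha₀ : 0 < a₀)
    (hint : ∀ a : ℝ, |a| ≤ a₀ → Integrable (fun ω => Real.exp (a * (η 0 ω : ℝ))) μ)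
    (Λ : ℝ → ℝ)
    (hΛ : ∀ a : ℝ, |a| ≤ a₀ → Λ a = Real.log (∫ ω, Real.exp (a * (η 0 ω : ℝ)) ∂μ))
    (σ : ℝ) (hσ : 0 < σ)
    -- `Λ(a) = σ²a²/2 + O(a⁴)` near 0
    (hΛasym : ∃ K : ℝ, ∀ a : ℝ, |a| ≤ a₀ → |Λ a - σ^2 * a^2 / 2| ≤ K * a^4)
    (α : ℝ) (hα : α ∈ Set.Ioo (0 : ℝ) 1) :
    ∃ b > 0, ∃ c₀ > 0, ∀ s : ℤ, 0 < s → ∀ N : ℕ, 1 ≤ N →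
      ((s : ℝ)^2 ≤ c₀ * N) →
      (∫ ω, Real.exp (-(1 / (N : ℝ)) * ∑ x ∈ Finset.range (Nat.sqrt N + 1),
            ((s : ℝ) + ∑ k ∈ Finset.range x, (η k ω : ℝ))^2) ∂μ
          ≤ Real.exp (-(Real.sqrt 2 * α * (1 - α) * (s : ℝ)^2) / (2 * σ * Real.sqrt N))
            + Real.exp (-((1 - α)^2 * (s : ℝ)^2 * ((Nat.sqrt N : ℝ) + 1)) / N)) ∧
      (Real.exp (-(Real.sqrt 2 * α * (1 - α) * (s : ℝ)^2) / (2 * σ * Real.sqrt N))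
            + Real.exp (-((1 - α)^2 * (s : ℝ)^2 * ((Nat.sqrt N : ℝ) + 1)) / N)
          ≤ 2 * Real.exp (-2 * b * (s : ℝ)^2 / Real.sqrt N)) := by
  classical
  obtain ⟨K, hK⟩ := hΛasym
  obtain ⟨hα0, hα1⟩ := hα
  have h1α : 0 < 1 - α := by linarith
  have hs2 : (0:ℝ) < Real.sqrt 2 := by positivity
  set K' : ℝ := max K 1 with hK'def
  have hK'1 : (1:ℝ) ≤ K' := le_max_right _ _
  have hK'0 : (0:ℝ) < K' := lt_of_lt_of_le one_pos hK'1
  have hKK' : K ≤ K' := le_max_left _ _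
  set b : ℝ := min (Real.sqrt 2 * α * (1 - α) / (4 * σ)) ((1 - α)^2 / 2) with hbdef
  set c₀ : ℝ := min (σ^2 * a₀^2 / 2) (Real.sqrt 2 * α * σ^3 / (8 * K' * (1 - α)^3)) with hc₀def
  have hb : 0 < b := lt_min (by positivity) (by positivity)
  have hc₀ : 0 < c₀ := lt_min (by positivity) (by positivity)
  refine ⟨b, hb, c₀, hc₀, ?_⟩
  intro s hs N hN hsN
  -- basic notation
  set sR : ℝ := (s : ℝ) with hsRdef
  have hsR : (0:ℝ) < sR := by rw [hsRdef]; exact_mod_cast hs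
  set n : ℕ := Nat.sqrt N with hndef
  have hN0 : (0:ℝ) < N := by exact_mod_cast hN
  set r : ℝ := Real.sqrt N with hrdef
  have hr0 : (0:ℝ) < r := Real.sqrt_pos.mpr hN0
  have hr2 : r^2 = N := Real.sq_sqrt hN0.le
  have hnr : (n : ℝ) ≤ r := rwqke_nat_sqrt_le N
  have hrn : r ≤ (n : ℝ) + 1 := rwqke_le_nat_sqrt N
  set a : ℝ := -(Real.sqrt 2 * (1 - α) * sR / (σ * r)) with hadef
  have ha0 : a < 0 := by
    rw [hadef]; simp only [neg_neg, neg_lt, neg_zero]; positivity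
  have ha2 : a^2 = 2 * (1 - α)^2 * sR^2 / (σ^2 * N) := by
    rw [hadef, ← hr2, neg_sq]
    rw [div_pow, mul_pow, mul_pow, Real.sq_sqrt (by norm_num : (2:ℝ) ≥ 0), mul_pow]
  have hsNc : sR^2 ≤ c₀ * N := hsN
  clear_value K' b c₀ sR n r a
  -- |a| ≤ a₀
  have haa₀ : |a| ≤ a₀ := by
    have h1 : a^2 ≤ a₀^2 := by
      rw [ha2]
      rw [div_le_iff₀ (by positivity)]
      have hc1 : c₀ ≤ σ^2 * a₀^2 / 2 := by rw [hc₀def]; exact min_le_left _ _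
      have h1a : (1-α)^2 ≤ 1 := by nlinarith
      have e1 : 2*(1-α)^2*sR^2 ≤ 2*sR^2 := by
        have := mul_le_mul_of_nonneg_right h1a (sq_nonneg sR)
        linarith
      have e2 : 2*sR^2 ≤ 2*(c₀*(N:ℝ)) := by linarith
      have e3 : 2*(c₀*(N:ℝ)) ≤ σ^2*a₀^2*(N:ℝ) := by
        have := mul_le_mul_of_nonneg_right hc1 hN0.le
        linarith
      linarith [e1, e2, e3]
    calc |a| = Real.sqrt (a^2) := (Real.sqrt_sq_eq_abs a).symm
      _ ≤ Real.sqrt (a₀^2) := Real.sqrt_le_sqrt h1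
      _ = a₀ := Real.sqrt_sq ha₀.le
  -- β and Λ bound
  set β : ℝ := (1 - α)^2 * sR^2 / N with hβdef
  have hβa : σ^2 * a^2 / 2 = β := by
    rw [ha2, hβdef]; field_simp
  clear_value β
  have hΛβ : Λ a ≤ β + K' * a^4 := by
    have h1 := (abs_le.mp (hK a haa₀)).2
    have ha4 : (0:ℝ) ≤ a^4 := by positivity
    have h2 : K * a^4 ≤ K' * a^4 := mul_le_mul_of_nonneg_right hKK' ha4
    linarith [hβa]
  -- walk definitions
  set S : ℕ → Ω → ℝ := fun x ω => ∑ k ∈ Finset.range x, (η k ω : ℝ) with hSdef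
  have hSmeas : ∀ x, Measurable (S x) := by
    intro x
    rw [hSdef]
    exact Finset.measurable_sum _ (fun k _ => (measurable_of_countable _).comp (hmeas k))
  set c : ℝ := -(α * sR) with hcdef
  set cond : ℕ → Ω → Prop :=
    fun x ω => S x ω ≤ c ∧ ∀ y, y < x → ¬ (S y ω ≤ c) with hconddef
  set I : ℕ → Ω → ℝ := fun x ω => if cond x ω then 1 else 0 with hIdef
  have hInn : ∀ x ω, 0 ≤ I x ω := by
    intro x ω; rw [hIdef]; dsimp only; split <;> norm_num
  have hIle : ∀ x ω, I x ω ≤ 1 := by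
    intro x ω; rw [hIdef]; dsimp only; split <;> norm_num
  have hcondmeas : ∀ x, MeasurableSet {ω | cond x ω} := by
    intro x
    have heq : {ω | cond x ω} = {ω | S x ω ≤ c} ∩ ⋂ (y : ℕ), ⋂ (_ : y < x), {ω | S y ω ≤ c}ᶜ := by
      ext ω
      simp only [hconddef, Set.mem_setOf_eq, Set.mem_inter_iff, Set.mem_iInter, Set.mem_compl_iff]
    rw [heq]
    exact (measurableSet_le (hSmeas x) measurable_const).inter
      (MeasurableSet.iInter fun y => MeasurableSet.iInter fun _ =>
        (measurableSet_le (hSmeas y) measurable_const).compl)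
  have hImeas : ∀ x, Measurable (I x) := by
    intro x
    rw [hIdef]
    exact Measurable.ite (hcondmeas x) measurable_const measurable_const
  -- integrability facts
  have hid : ∀ k, μ.map (η k) = μ.map (η 0) := fun k => (hident k).trans (hident 0).symm
  have h0int : Integrable (fun ω => Real.exp (a * (η 0 ω : ℝ))) μ := hint a haa₀
  have hintsum : ∀ t : Finset ℕ, Integrable (fun ω => Real.exp (a * ∑ k ∈ t, (η k ω : ℝ))) μ :=
    fun t => rwqke_int_sum hmeas hid hindep h0int t
  have hintS : ∀ x, Integrable (fun ω => Real.exp (a * S x ω)) μ := by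
    intro x
    have := hintsum (Finset.range x)
    rw [hSdef]
    exact this
  have hintIS : ∀ x y, Integrable (fun ω => I x ω * Real.exp (a * S y ω)) μ := by
    intro x y
    exact (hintS y).bdd_mul (hImeas x).aestronglyMeasurable
      (c := 1) (ae_of_all _ fun ω => by
        rw [Real.norm_eq_abs, abs_le]; constructor <;> [linarith [hInn x ω]; exact hIle x ω])
  have hIint : ∀ x, Integrable (I x) μ := by
    intro x
    refine (integrable_const (1:ℝ)).mono' (hImeas x).aestronglyMeasurable ?_
    exact ae_of_all _ fun ω => by
      rw [Real.norm_eq_abs, abs_le]; constructor <;> [linarith [hInn x ω]; exact hIle x ω]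
  set M : ℝ := ∫ ω, Real.exp (a * (η 0 ω : ℝ)) ∂μ with hMdef
  have hMpos : 0 < M := by
    have := mgf_pos (X := fun ω => ((η 0 ω : ℝ))) (t := a) h0int
    simpa [mgf, hMdef] using this
  have hMe : Real.exp (Λ a) = M := by
    have h := hΛ a haa₀
    rw [← hMdef] at h
    rw [h, Real.exp_log hMpos]
  have hintval : ∀ t : Finset ℕ,
      ∫ ω, Real.exp (a * ∑ k ∈ t, (η k ω : ℝ)) ∂μ = M ^ t.card := by
    intro t
    rw [rwqke_integral_sum hmeas hid hindep t, ← hMdef]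
  -- the key independence identity
  have key : ∀ x, x ≤ n → (∫ ω, I x ω * Real.exp (a * S n ω) ∂μ)
      = (∫ ω, I x ω * Real.exp (a * S x ω) ∂μ) * M ^ (n - x) := by
    intro x hx
    have hF' : ∀ f g : ℕ → ℤ, (∀ k, k < x → f k = g k) →
        ((if ((∑ k ∈ Finset.range x, (f k : ℝ)) ≤ c ∧
            ∀ y, y < x → ¬ ((∑ k ∈ Finset.range y, (f k : ℝ)) ≤ c)) then (1:ℝ) else 0)
          * Real.exp (a * ∑ k ∈ Finset.range x, (f k : ℝ)))
        = ((if ((∑ k ∈ Finset.range x, (g k : ℝ)) ≤ c ∧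
            ∀ y, y < x → ¬ ((∑ k ∈ Finset.range y, (g k : ℝ)) ≤ c)) then (1:ℝ) else 0)
          * Real.exp (a * ∑ k ∈ Finset.range x, (g k : ℝ))) := by
      intro f g hfg
      have hsum : ∀ y, y ≤ x →
          (∑ k ∈ Finset.range y, (f k : ℝ)) = ∑ k ∈ Finset.range y, (g k : ℝ) :=
        fun y hy => Finset.sum_congr rfl fun k hk => by
          rw [hfg k (lt_of_lt_of_le (Finset.mem_range.mp hk) hy)]
      rw [hsum x le_rfl]
      congr 1
      refine if_congr ?_ rfl rfl
      constructor
      · rintro ⟨h1, h2⟩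
        exact ⟨h1, fun y hy hcy => h2 y hy (by rwa [hsum y hy.le])⟩
      · rintro ⟨h1, h2⟩
        exact ⟨h1, fun y hy hcy => h2 y hy (by rwa [← hsum y hy.le])⟩
    have hG' : ∀ f g : ℕ → ℤ, (∀ k, x ≤ k → k < n → f k = g k) →
        Real.exp (a * ∑ k ∈ Finset.Ico x n, (f k : ℝ))
          = Real.exp (a * ∑ k ∈ Finset.Ico x n, (g k : ℝ)) := by
      intro f g hfg
      rw [Finset.sum_congr rfl fun k hk => by
        rw [hfg k (Finset.mem_Ico.mp hk).1 (Finset.mem_Ico.mp hk).2]]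
    have hFG : IndepFun (fun ω => I x ω * Real.exp (a * S x ω))
        (fun ω => Real.exp (a * ∑ k ∈ Finset.Ico x n, (η k ω : ℝ))) μ := by
      have h := rwqke_indep_helper η hmeas hindep x n _ _ hF' hG'
      convert h using 1
    have hFint := hintIS x x
    have hGint := hintsum (Finset.Ico x n)
    have hmul := hFG.integral_fun_mul_eq_mul_integral hFint.1 hGint.1
    have hmul' : ∫ ω, (I x ω * Real.exp (a * S x ω))
          * Real.exp (a * ∑ k ∈ Finset.Ico x n, (η k ω : ℝ)) ∂μ
        = (∫ ω, I x ω * Real.exp (a * S x ω) ∂μ)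
          * ∫ ω, Real.exp (a * ∑ k ∈ Finset.Ico x n, (η k ω : ℝ)) ∂μ := by
      simpa [Pi.mul_apply] using hmul
    have hGval : ∫ ω, Real.exp (a * ∑ k ∈ Finset.Ico x n, (η k ω : ℝ)) ∂μ
        = M ^ (n - x) := by
      rw [hintval (Finset.Ico x n), Nat.card_Ico]
    have hFGeq : (fun ω => (I x ω * Real.exp (a * S x ω))
          * Real.exp (a * ∑ k ∈ Finset.Ico x n, (η k ω : ℝ)))
        = fun ω => I x ω * Real.exp (a * S n ω) := by
      funext ω
      simp only [hSdef]
      rw [mul_assoc, ← Real.exp_add, ← mul_add, Finset.sum_range_add_sum_Ico _ hx]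
    rw [← hFGeq, hmul', hGval]
  clear_value S M
  -- step 2: indicator bound via exponential tilt
  have step2 : ∀ x, (∫ ω, I x ω ∂μ)
      ≤ Real.exp (a * (α * sR)) * ∫ ω, I x ω * Real.exp (a * S x ω) ∂μ := by
    intro x
    have hpt : ∀ ω, I x ω ≤ Real.exp (a * (α * sR)) * (I x ω * Real.exp (a * S x ω)) := by
      intro ω
      rw [hIdef]; dsimp only
      by_cases h : cond x ω
      · rw [if_pos h]
        have hSx : S x ω ≤ c := h.1
        have h1 : a * c ≤ a * S x ω := mul_le_mul_of_nonpos_left hSx ha0.le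
        have h2 : (0:ℝ) ≤ a * (α * sR) + a * S x ω := by
          rw [hcdef] at h1
          linarith [h1]
        calc (1:ℝ) = Real.exp 0 := (Real.exp_zero).symm
          _ ≤ Real.exp (a * (α * sR) + a * S x ω) := Real.exp_le_exp.mpr h2
          _ = Real.exp (a * (α * sR)) * (1 * Real.exp (a * S x ω)) := by
              rw [Real.exp_add]; ring
      · rw [if_neg h]
        have : Real.exp (a * (α * sR)) * ((0:ℝ) * Real.exp (a * S x ω)) = 0 := by ring
        rw [this]
    have h := integral_mono (hIint x) ((hintIS x x).const_mul _) hpt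
    rwa [integral_const_mul] at h
  have hJ_nonneg : ∀ x y, 0 ≤ ∫ ω, I x ω * Real.exp (a * S y ω) ∂μ := fun x y =>
    integral_nonneg fun ω => mul_nonneg (hInn x ω) (Real.exp_pos _).le
  -- step 2b : discounting
  have h2b : ∀ x, x ≤ n → Real.exp (-(β * x)) * ∫ ω, I x ω * Real.exp (a * S x ω) ∂μ
      ≤ (Real.exp ((n:ℝ) * (K' * a^4)) / M ^ n) * ∫ ω, I x ω * Real.exp (a * S n ω) ∂μ := by
    intro x hx
    rw [key x hx]
    have hMn : (M:ℝ) ^ n = M ^ (n - x) * M ^ x := by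
      rw [← pow_add]; congr 1; omega
    have hMx : M ^ x = Real.exp ((x:ℝ) * Λ a) := by
      rw [← hMe, ← Real.exp_nat_mul]
    have hexp : Real.exp (-(β * x)) * M ^ x ≤ Real.exp ((n:ℝ) * (K' * a^4)) := by
      rw [hMx, ← Real.exp_add]
      apply Real.exp_le_exp.mpr
      have hxn : (x:ℝ) ≤ (n:ℝ) := Nat.cast_le.mpr hx
      have h4 : (0:ℝ) ≤ K' * a^4 := by positivity
      linarith [mul_le_mul_of_nonneg_left hΛβ (Nat.cast_nonneg x : (0:ℝ) ≤ (x:ℝ)),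
        mul_le_mul_of_nonneg_right hxn h4]
    have hre : (Real.exp ((n:ℝ)*(K'*a^4)) / M ^ n)
          * ((∫ ω, I x ω * Real.exp (a * S x ω) ∂μ) * M^(n-x))
        = (Real.exp ((n:ℝ)*(K'*a^4)) / M ^ x) * ∫ ω, I x ω * Real.exp (a * S x ω) ∂μ := by
      rw [hMn]
      have e2 : M ^ (n-x) ≠ 0 := (pow_pos hMpos _).ne'
      have e3 : M ^ x ≠ 0 := (pow_pos hMpos _).ne'
      field_simp
    rw [hre]
    apply mul_le_mul_of_nonneg_right _ (hJ_nonneg x x)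
    rw [le_div_iff₀ (pow_pos hMpos x)]
    exact hexp
  -- indicators are disjoint
  have hsumI : ∀ ω, ∑ x ∈ Finset.range (n+1), I x ω ≤ 1 := by
    intro ω
    rw [hIdef]; dsimp only
    rw [Finset.sum_boole]
    have hcard : ((Finset.range (n+1)).filter (fun x => cond x ω)).card ≤ 1 := by
      apply Finset.card_le_one.mpr
      intro u hu v hv
      simp only [Finset.mem_filter, hconddef] at hu hv
      by_contra hne
      rcases lt_or_gt_of_ne hne with h | h
      · exact hv.2.2 u h hu.2.1
      · exact hu.2.2 v h hv.2.1
    exact_mod_cast hcard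
  have hsum_le : ∑ x ∈ Finset.range (n+1), ∫ ω, I x ω * Real.exp (a * S n ω) ∂μ ≤ M ^ n := by
    rw [← integral_finset_sum _ (fun x _ => hintIS x n)]
    have hmono : (∫ ω, ∑ x ∈ Finset.range (n+1), I x ω * Real.exp (a * S n ω) ∂μ)
        ≤ ∫ ω, Real.exp (a * S n ω) ∂μ := by
      apply integral_mono (integrable_finset_sum _ (fun x _ => hintIS x n)) (hintS n)
      intro ω
      dsimp only
      rw [← Finset.sum_mul]
      exact mul_le_of_le_one_left (Real.exp_pos _).le (hsumI ω)
    refine hmono.trans ?_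
    have h := hintval (Finset.range n)
    rw [Finset.card_range] at h
    rw [hSdef]
    exact h.le
  -- main chain
  have main1 : ∑ x ∈ Finset.range (n+1), Real.exp (-(β * x)) * (∫ ω, I x ω ∂μ)
      ≤ Real.exp (a * (α * sR) + (n:ℝ) * (K' * a^4)) := by
    calc ∑ x ∈ Finset.range (n+1), Real.exp (-(β * x)) * (∫ ω, I x ω ∂μ)
        ≤ ∑ x ∈ Finset.range (n+1), Real.exp (a*(α*sR))
            * (Real.exp ((n:ℝ)*(K'*a^4)) / M ^ n)
            * ∫ ω, I x ω * Real.exp (a * S n ω) ∂μ := by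
          apply Finset.sum_le_sum
          intro x hxmem
          have hx : x ≤ n := by
            have := Finset.mem_range.mp hxmem; omega
          calc Real.exp (-(β * x)) * (∫ ω, I x ω ∂μ)
              ≤ Real.exp (-(β * x)) * (Real.exp (a*(α*sR))
                  * ∫ ω, I x ω * Real.exp (a * S x ω) ∂μ) :=
                mul_le_mul_of_nonneg_left (step2 x) (Real.exp_pos _).le
            _ = Real.exp (a*(α*sR))
                  * (Real.exp (-(β * x)) * ∫ ω, I x ω * Real.exp (a * S x ω) ∂μ) := by ring
            _ ≤ Real.exp (a*(α*sR)) * ((Real.exp ((n:ℝ)*(K'*a^4)) / M ^ n)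
                  * ∫ ω, I x ω * Real.exp (a * S n ω) ∂μ) :=
                mul_le_mul_of_nonneg_left (h2b x hx) (Real.exp_pos _).le
            _ = Real.exp (a*(α*sR)) * (Real.exp ((n:ℝ)*(K'*a^4)) / M ^ n)
                  * ∫ ω, I x ω * Real.exp (a * S n ω) ∂μ := by ring
      _ = Real.exp (a*(α*sR)) * (Real.exp ((n:ℝ)*(K'*a^4)) / M ^ n)
            * ∑ x ∈ Finset.range (n+1), ∫ ω, I x ω * Real.exp (a * S n ω) ∂μ := by
          rw [← Finset.mul_sum]
      _ ≤ Real.exp (a*(α*sR)) * (Real.exp ((n:ℝ)*(K'*a^4)) / M ^ n) * M ^ n := by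
          apply mul_le_mul_of_nonneg_left hsum_le (by positivity)
      _ = Real.exp (a*(α*sR)) * Real.exp ((n:ℝ)*(K'*a^4)) := by
          field_simp
      _ = Real.exp (a*(α*sR) + (n:ℝ)*(K'*a^4)) := (Real.exp_add _ _).symm
  -- step 1 : pointwise splitting
  set B : ℝ := ((1-α)^2 * sR^2 * ((n:ℝ)+1)) / N with hBdef
  have hpt1 : ∀ ω, Real.exp (-(1/(N:ℝ)) * ∑ x ∈ Finset.range (n+1), (sR + S x ω)^2)
      ≤ (∑ x ∈ Finset.range (n+1), Real.exp (-(β * x)) * I x ω) + Real.exp (-B) := by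
    intro ω
    have hterm_nonneg : ∀ x : ℕ, 0 ≤ Real.exp (-(β * (x:ℝ))) * I x ω := fun x =>
      mul_nonneg (Real.exp_pos _).le (hInn x ω)
    by_cases hex : ∃ x, x < n + 1 ∧ S x ω ≤ c
    · obtain ⟨x1, hx1lt, hx1P⟩ := hex
      have hex' : ∃ x, S x ω ≤ c := ⟨x1, hx1P⟩
      have hx0P : S (Nat.find hex') ω ≤ c := Nat.find_spec hex'
      have hx0min : ∀ y, y < Nat.find hex' → ¬ S y ω ≤ c := fun y hy => Nat.find_min hex' hy
      have hx0le : Nat.find hex' < n + 1 := lt_of_le_of_lt (Nat.find_min' hex' hx1P) hx1lt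
      set x0 := Nat.find hex' with hx0def
      have hcond0 : cond x0 ω := by rw [hconddef]; exact ⟨hx0P, hx0min⟩
      have hterm : ∀ y ∈ Finset.range x0, ((1-α)*sR)^2 ≤ (sR + S y ω)^2 := by
        intro y hy
        have hgt : c < S y ω := not_le.mp (hx0min y (Finset.mem_range.mp hy))
        rw [hcdef] at hgt
        have h1 : (1-α)*sR ≤ sR + S y ω := by linarith
        exact pow_le_pow_left₀ (by positivity) h1 2
      have hsumlb : (x0:ℝ) * ((1-α)*sR)^2 ≤ ∑ x ∈ Finset.range (n+1), (sR + S x ω)^2 := by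
        calc (x0:ℝ) * ((1-α)*sR)^2 = ∑ y ∈ Finset.range x0, ((1-α)*sR)^2 := by
              rw [Finset.sum_const, Finset.card_range, nsmul_eq_mul]
          _ ≤ ∑ y ∈ Finset.range x0, (sR + S y ω)^2 := Finset.sum_le_sum hterm
          _ ≤ _ := Finset.sum_le_sum_of_subset_of_nonneg
              (Finset.range_subset_range.mpr (by omega)) (fun i _ _ => sq_nonneg _)
      have hfle : Real.exp (-(1/(N:ℝ)) * ∑ x ∈ Finset.range (n+1), (sR + S x ω)^2)
          ≤ Real.exp (-(β * x0)) := by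
        apply Real.exp_le_exp.mpr
        have hβx : β * (x0:ℝ) = (1/(N:ℝ)) * ((x0:ℝ) * ((1-α)*sR)^2) := by
          rw [hβdef]; field_simp
        have h := mul_le_mul_of_nonneg_left hsumlb
          (le_of_lt (by positivity : (0:ℝ) < 1/(N:ℝ)))
        linarith
      calc Real.exp (-(1/(N:ℝ)) * ∑ x ∈ Finset.range (n+1), (sR + S x ω)^2)
          ≤ Real.exp (-(β * x0)) := hfle
        _ = Real.exp (-(β * x0)) * I x0 ω := by
            rw [hIdef]; dsimp only; rw [if_pos hcond0, mul_one]
        _ ≤ ∑ x ∈ Finset.range (n+1), Real.exp (-(β * x)) * I x ω :=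
            Finset.single_le_sum (fun i _ => hterm_nonneg i) (Finset.mem_range.mpr hx0le)
        _ ≤ _ := le_add_of_le_of_nonneg le_rfl (Real.exp_pos _).le
    · have hex' : ∀ y, y ∈ Finset.range (n+1) → ¬ (S y ω ≤ c) := fun y hy hP =>
        hex ⟨y, Finset.mem_range.mp hy, hP⟩
      have hterm : ∀ y ∈ Finset.range (n+1), ((1-α)*sR)^2 ≤ (sR + S y ω)^2 := by
        intro y hy
        have hgt : c < S y ω := not_le.mp (hex' y hy)
        rw [hcdef] at hgt
        have h1 : (1-α)*sR ≤ sR + S y ω := by linarith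
        exact pow_le_pow_left₀ (by positivity) h1 2
      have hsumlb : ((n:ℝ)+1) * ((1-α)*sR)^2 ≤ ∑ x ∈ Finset.range (n+1), (sR + S x ω)^2 := by
        calc ((n:ℝ)+1) * ((1-α)*sR)^2 = ∑ y ∈ Finset.range (n+1), ((1-α)*sR)^2 := by
              rw [Finset.sum_const, Finset.card_range, nsmul_eq_mul]; push_cast; ring
          _ ≤ _ := Finset.sum_le_sum hterm
      have hfle : Real.exp (-(1/(N:ℝ)) * ∑ x ∈ Finset.range (n+1), (sR + S x ω)^2)
          ≤ Real.exp (-B) := by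
        apply Real.exp_le_exp.mpr
        have hBeq : B = (1/(N:ℝ)) * (((n:ℝ)+1) * ((1-α)*sR)^2) := by
          rw [hBdef]; field_simp
        have h := mul_le_mul_of_nonneg_left hsumlb
          (le_of_lt (by positivity : (0:ℝ) < 1/(N:ℝ)))
        linarith
      calc Real.exp (-(1/(N:ℝ)) * ∑ x ∈ Finset.range (n+1), (sR + S x ω)^2)
          ≤ Real.exp (-B) := hfle
        _ ≤ _ := le_add_of_nonneg_left (Finset.sum_nonneg fun i _ => hterm_nonneg i)
  -- integrate step 1
  have hfmeas : Measurable (fun ω =>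
      Real.exp (-(1/(N:ℝ)) * ∑ x ∈ Finset.range (n+1), (sR + S x ω)^2)) := by
    apply Measurable.exp
    apply Measurable.const_mul
    exact Finset.measurable_sum _ fun x _ => ((measurable_const.add (hSmeas x)).pow_const 2)
  have hfint : Integrable (fun ω =>
      Real.exp (-(1/(N:ℝ)) * ∑ x ∈ Finset.range (n+1), (sR + S x ω)^2)) μ := by
    refine (integrable_const (1:ℝ)).mono' hfmeas.aestronglyMeasurable (ae_of_all _ fun ω => ?_)
    rw [Real.norm_eq_abs, abs_of_pos (Real.exp_pos _)]
    calc Real.exp (-(1/(N:ℝ)) * ∑ x ∈ Finset.range (n+1), (sR + S x ω)^2)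
        ≤ Real.exp 0 := Real.exp_le_exp.mpr (by
          have hnn : (0:ℝ) ≤ ∑ x ∈ Finset.range (n+1), (sR + S x ω)^2 :=
            Finset.sum_nonneg fun i _ => sq_nonneg _
          have h2 : (0:ℝ) ≤ (1/(N:ℝ)) * ∑ x ∈ Finset.range (n+1), (sR + S x ω)^2 :=
            mul_nonneg (by positivity) hnn
          linarith)
      _ = 1 := Real.exp_zero
  have hstep1 : ∫ ω, Real.exp (-(1/(N:ℝ)) * ∑ x ∈ Finset.range (n+1), (sR + S x ω)^2) ∂μ
      ≤ (∑ x ∈ Finset.range (n+1), Real.exp (-(β * x)) * ∫ ω, I x ω ∂μ) + Real.exp (-B) := by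
    have hgint : Integrable (fun ω =>
        (∑ x ∈ Finset.range (n+1), Real.exp (-(β * x)) * I x ω) + Real.exp (-B)) μ := by
      apply Integrable.add
      · exact integrable_finset_sum _ fun x _ => ((hIint x).const_mul _)
      · exact integrable_const _
    have h := integral_mono hfint hgint hpt1
    rw [integral_add (integrable_finset_sum _ fun x _ => ((hIint x).const_mul _))
      (integrable_const _), integral_finset_sum _ (fun x _ => (hIint x).const_mul _)] at h
    simp only [integral_const, measure_univ, ENNReal.toReal_one, smul_eq_mul, one_mul,
      integral_const_mul, probReal_univ] at h
    simpa using h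
  -- numerics : the exponent bound
  have ha4eq : a^4 = 4*(1-α)^4*sR^4/(σ^4*(N:ℝ)^2) := by
    rw [show a^4 = (a^2)^2 from by ring, ha2, div_pow]
    ring
  have hnK : (n:ℝ) * (K' * a^4) ≤ Real.sqrt 2 * α * (1-α) * sR^2 / (2*σ*r) := by
    have hc2 : c₀ * (8*K'*(1-α)^3) ≤ Real.sqrt 2 * α * σ^3 := by
      have h := min_le_right (σ^2*a₀^2/2) (Real.sqrt 2*α*σ^3/(8*K'*(1-α)^3))
      rw [← hc₀def] at h
      exact (le_div_iff₀ (by positivity)).mp h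
    have hsR4 : sR^4 ≤ c₀*(N:ℝ)*sR^2 := by
      have := mul_le_mul_of_nonneg_right hsNc (sq_nonneg sR)
      calc sR^4 = sR^2*sR^2 := by ring
        _ ≤ c₀*(N:ℝ)*sR^2 := this
    have ha4le : a^4 ≤ 4*(1-α)^4*(c₀*(N:ℝ)*sR^2)/(σ^4*(N:ℝ)^2) := by
      rw [ha4eq]
      gcongr
    have hE1 : r*(K'*(4*(1-α)^4*(c₀*(N:ℝ)*sR^2)/(σ^4*(N:ℝ)^2)))
        = 4*K'*(1-α)^4*c₀*sR^2/(σ^4*r) := by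
      rw [← hr2]
      field_simp
    calc (n:ℝ)*(K'*a^4) ≤ r*(K'*a^4) := by
          apply mul_le_mul_of_nonneg_right hnr (by positivity)
      _ ≤ r*(K'*(4*(1-α)^4*(c₀*(N:ℝ)*sR^2)/(σ^4*(N:ℝ)^2))) := by
          apply mul_le_mul_of_nonneg_left _ hr0.le
          exact mul_le_mul_of_nonneg_left ha4le hK'0.le
      _ = 4*K'*(1-α)^4*c₀*sR^2/(σ^4*r) := hE1
      _ ≤ Real.sqrt 2 * α * (1-α) * sR^2 / (2*σ*r) := by
          have ht : (0:ℝ) ≤ (1-α)*sR^2/(2*σ^4*r) := by positivity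
          have hmm := mul_le_mul_of_nonneg_right hc2 ht
          have e2 : c₀*(8*K'*(1-α)^3) * ((1-α)*sR^2/(2*σ^4*r))
              = 4*K'*(1-α)^4*c₀*sR^2/(σ^4*r) := by
            field_simp; ring
          have e3 : (Real.sqrt 2*α*σ^3) * ((1-α)*sR^2/(2*σ^4*r))
              = Real.sqrt 2*α*(1-α)*sR^2/(2*σ*r) := by
            field_simp
          rw [← e2, ← e3]
          exact hmm
  have haeq : a*(α*sR) = -(2*(Real.sqrt 2*α*(1-α)*sR^2/(2*σ*r))) := by
    rw [hadef]
    field_simp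
  have hfinal1 : ∑ x ∈ Finset.range (n+1), Real.exp (-(β * x)) * (∫ ω, I x ω ∂μ)
      ≤ Real.exp (-(Real.sqrt 2 * α * (1-α) * sR^2) / (2*σ*r)) := by
    refine le_trans main1 (Real.exp_le_exp.mpr ?_)
    have hden : -(Real.sqrt 2 * α * (1-α) * sR^2) / (2*σ*r)
        = -(Real.sqrt 2 * α * (1-α) * sR^2 / (2*σ*r)) := by ring
    rw [hden]
    linarith [hnK, haeq]
  -- conclusion
  constructor
  · have e1 : Real.exp (-B) = Real.exp (-((1-α)^2*sR^2*((n:ℝ)+1))/(N:ℝ)) := by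
      rw [hBdef, neg_div]
    have conc : ∫ ω, Real.exp (-(1/(N:ℝ)) * ∑ x ∈ Finset.range (n+1), (sR + S x ω)^2) ∂μ
        ≤ Real.exp (-(Real.sqrt 2 * α * (1-α) * sR^2) / (2*σ*r))
            + Real.exp (-((1-α)^2*sR^2*((n:ℝ)+1))/(N:ℝ)) :=
      calc ∫ ω, Real.exp (-(1/(N:ℝ)) * ∑ x ∈ Finset.range (n+1), (sR + S x ω)^2) ∂μ
        ≤ (∑ x ∈ Finset.range (n+1), Real.exp (-(β * x)) * ∫ ω, I x ω ∂μ) + Real.exp (-B) :=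
          hstep1
      _ ≤ Real.exp (-(Real.sqrt 2 * α * (1-α) * sR^2) / (2*σ*r)) + Real.exp (-B) :=
          add_le_add hfinal1 le_rfl
      _ = Real.exp (-(Real.sqrt 2 * α * (1-α) * sR^2) / (2*σ*r))
            + Real.exp (-((1-α)^2*sR^2*((n:ℝ)+1))/(N:ℝ)) := by rw [e1]
    simp only [hSdef] at conc
    convert conc using 2 <;> norm_num
  · have hb1 : b*(4*σ) ≤ Real.sqrt 2*α*(1-α) := by
      have h := min_le_left (Real.sqrt 2 * α * (1 - α) / (4 * σ)) ((1 - α)^2 / 2)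
      rw [← hbdef] at h
      exact (le_div_iff₀ (by positivity)).mp h
    have hb2 : b ≤ (1-α)^2/2 := by
      have h := min_le_right (Real.sqrt 2 * α * (1 - α) / (4 * σ)) ((1 - α)^2 / 2)
      rw [← hbdef] at h
      exact h
    have t1 : Real.exp (-(Real.sqrt 2*α*(1-α)*sR^2)/(2*σ*r)) ≤ Real.exp (-2*b*sR^2/r) := by
      apply Real.exp_le_exp.mpr
      have e0 : -(Real.sqrt 2*α*(1-α)*sR^2)/(2*σ*r)
          = -(Real.sqrt 2*α*(1-α)*sR^2/(2*σ*r)) := neg_div _ _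
      have e1 : -2*b*sR^2/r = -(2*b*sR^2/r) := by ring
      rw [e0, e1]
      apply neg_le_neg
      have hu : (0:ℝ) ≤ sR^2/(2*σ*r) := by positivity
      have hmm := mul_le_mul_of_nonneg_right hb1 hu
      have e2 : b*(4*σ) * (sR^2/(2*σ*r)) = 2*b*sR^2/r := by field_simp; ring
      have e3 : (Real.sqrt 2*α*(1-α)) * (sR^2/(2*σ*r))
          = Real.sqrt 2*α*(1-α)*sR^2/(2*σ*r) := by ring
      rw [← e2, ← e3]
      exact hmm
    have t2 : Real.exp (-((1-α)^2*sR^2*((n:ℝ)+1))/(N:ℝ)) ≤ Real.exp (-2*b*sR^2/r) := by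
      apply Real.exp_le_exp.mpr
      have hb2' : 2*b ≤ (1-α)^2 := by linarith
      have h1 : (2*b)*r ≤ (1-α)^2*((n:ℝ)+1) := mul_le_mul hb2' hrn hr0.le (by positivity)
      have h2 := mul_le_mul_of_nonneg_right h1 (sq_nonneg sR)
      have hnum : 2*b*sR^2*r ≤ (1-α)^2*sR^2*((n:ℝ)+1) := by linarith [h2]
      have e4 : -2*b*sR^2/r = -(2*b*sR^2*r/(N:ℝ)) := by
        rw [← hr2]; field_simp
      have e5 : -((1-α)^2*sR^2*((n:ℝ)+1))/(N:ℝ)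
          = -(((1-α)^2*sR^2*((n:ℝ)+1))/(N:ℝ)) := neg_div _ _
      rw [e4, e5]
      apply neg_le_neg
      exact (div_le_div_iff_of_pos_right hN0).mpr hnum
    calc Real.exp (-(Real.sqrt 2*α*(1-α)*sR^2)/(2*σ*r))
          + Real.exp (-((1-α)^2*sR^2*((n:ℝ)+1))/(N:ℝ))
        ≤ Real.exp (-2*b*sR^2/r) + Real.exp (-2*b*sR^2/r) := add_le_add t1 t2
      _ = 2 * Real.exp (-2*b*sR^2/r) := by ring
end
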